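/- Let q = 2^n and a ∈ F_q with lifted trace T̂(a) = Σ_{i=0}^{n-1} ω(a^{2^i}) and quadratic trace Q(a) = Σ_{0≤i<j<n} a^{2^i+2^j} ∈ F_2. Then: T̂(a) ≡ 0 (mod 4) iff Tr(a)=0 and Q(a)=0; T̂(a) ≡ 1 (mod 4) iff Tr(a)=1 and Q(a)=0; T̂(a) ≡ 2 (mod 4) iff Tr(a)=0 and Q(a)=1; T̂(a) ≡ 3 (mod 4) iff Tr(a)=1 and Q(a)=1. (Congruences in the ring of integers of ℚ_2(ξ).) -/

import Mathlib

open MvPolynomial Finset WittVector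

theorem wittAdd_one' : WittVector.wittAdd 2 1 =
    X (0, 1) + X (1, 1) - X (0, 0) * X (1, 0) := by
  apply MvPolynomial.map_injective (Int.castRingHom ℚ) Int.cast_injective
  rw [show WittVector.wittAdd 2 1 = wittStructureInt 2 (X 0 + X 1) 1 from rfl,
    map_wittStructureInt]
  have h0 : wittStructureRat 2 (MvPolynomial.map (Int.castRingHom ℚ) (X 0 + X 1 : MvPolynomial (Fin 2) ℤ)) 0
      = X (0, 0) + X (1, 0) := by
    rw [wittStructureRat_rec]
    simp [wittPolynomial_zero]
  have aux := wittStructureRat_rec_aux 2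
    (MvPolynomial.map (Int.castRingHom ℚ) (X 0 + X 1 : MvPolynomial (Fin 2) ℤ)) 1
  rw [Finset.sum_range_one, h0] at aux
  simp only [map_add, map_sub, map_mul, map_X, wittPolynomial_one, bind₁_X_right,
    rename_X, rename_C, bind₁_C_right, pow_zero, pow_one, C_1, Nat.cast_ofNat] at aux ⊢
  apply mul_right_cancel₀ (b := (C (2:ℚ) : MvPolynomial (Fin 2 × ℕ) ℚ))
    ((C_injective _ ℚ).ne_iff' (map_zero _)|>.2 two_ne_zero)
  simp only [map_pow, rename_X] at aux
  have hC2 : (C (2:ℚ) : MvPolynomial (Fin 2 × ℕ) ℚ) = 2 := map_ofNat C 2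
  linear_combination aux + (X (0, 0) * X (1, 0)) * hC2

theorem add_coeff_one' {R : Type*} [CommRing R] (x y : WittVector 2 R) :
    (x + y).coeff 1 = x.coeff 1 + y.coeff 1 - x.coeff 0 * y.coeff 0 := by
  rw [WittVector.add_coeff, wittAdd_one']
  simp [WittVector.peval, Function.uncurry]

theorem four_dvd_iff' {F : Type*} [Field F] [Finite F] [CharP F 2] (x : WittVector 2 F) :
    (4 : WittVector 2 F) ∣ x ↔ x.coeff 0 = 0 ∧ x.coeff 1 = 0 := by
  haveI : ExpChar F 2 := ExpChar.prime Nat.prime_two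
  constructor
  · rintro ⟨y, rfl⟩
    have h4 : (4 : WittVector 2 F) * y = y * ((2:ℕ) : WittVector 2 F) * ((2:ℕ) : WittVector 2 F) := by
      push_cast; ring
    rw [h4]
    refine ⟨WittVector.mul_charP_coeff_zero _, ?_⟩
    have := WittVector.mul_charP_coeff_succ (p := 2) (y * ((2:ℕ) : WittVector 2 F)) 0
    rw [this, WittVector.mul_charP_coeff_zero]
    simp
  · rintro ⟨h0, h1⟩
    set z : WittVector 2 F := WittVector.mk 2 (fun i => x.coeff (i + 2)) with hz
    refine ⟨(WittVector.frobeniusEquiv 2 F).symm ((WittVector.frobeniusEquiv 2 F).symm z), ?_⟩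
    set w := (WittVector.frobeniusEquiv 2 F).symm ((WittVector.frobeniusEquiv 2 F).symm z) with hw
    have key : (4 : WittVector 2 F) * w =
        WittVector.verschiebung (WittVector.verschiebung
          (WittVector.frobenius (WittVector.frobenius w))) := by
      have h1' : ∀ u : WittVector 2 F, u * ((2:ℕ) : WittVector 2 F) =
          WittVector.verschiebung (WittVector.frobenius u) :=
        fun u => (WittVector.verschiebung_frobenius u).symm
      have h4 : (4 : WittVector 2 F) * w = w * ((2:ℕ) : WittVector 2 F) * ((2:ℕ) : WittVector 2 F) := by
        push_cast; ring
      have hcomm : ∀ u : WittVector 2 F, WittVector.frobenius (WittVector.verschiebung u) =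
          WittVector.verschiebung (WittVector.frobenius u) :=
        fun u => (WittVector.verschiebung_frobenius_comm u).symm
      rw [h4, h1', h1', hcomm]
    have hffw : WittVector.frobenius (WittVector.frobenius w) = z := by
      rw [hw]
      have : ∀ u : WittVector 2 F, WittVector.frobenius u = WittVector.frobeniusEquiv 2 F u := fun _ => rfl
      rw [this, this, RingEquiv.apply_symm_apply, RingEquiv.apply_symm_apply]
    rw [key, hffw]
    ext i
    match i with
    | 0 => simp [WittVector.verschiebung_coeff_zero, h0]
    | 1 => simp [WittVector.verschiebung_coeff_succ, WittVector.verschiebung_coeff_zero, h1]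
    | (i+2) => simp [WittVector.verschiebung_coeff_succ, hz, WittVector.coeff_mk]

theorem sum_teich_coeffs {R : Type*} [CommRing R] [CharP R 2] (a : R) (n : ℕ) :
    (∑ i ∈ Finset.range n, WittVector.teichmuller 2 (a ^ 2 ^ i)).coeff 0
      = ∑ i ∈ Finset.range n, a ^ 2 ^ i ∧
    (∑ i ∈ Finset.range n, WittVector.teichmuller 2 (a ^ 2 ^ i)).coeff 1
      = ∑ i ∈ Finset.range n, ∑ j ∈ Finset.Ioo i n, a ^ (2 ^ i + 2 ^ j) := by
  induction n with
  | zero => simp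
  | succ n ih =>
    rw [Finset.sum_range_succ (f := fun i => WittVector.teichmuller 2 (a ^ 2 ^ i))]
    constructor
    · rw [WittVector.add_coeff_zero, ih.1, WittVector.teichmuller_coeff_zero,
        Finset.sum_range_succ]
    · rw [add_coeff_one', ih.2, WittVector.teichmuller_coeff_pos 2 (a ^ 2 ^ n) 1 one_pos,
        WittVector.teichmuller_coeff_zero, ih.1, add_zero, CharTwo.sub_eq_add]
      rw [Finset.sum_range_succ (f := fun i => ∑ j ∈ Finset.Ioo i (n+1), a ^ (2 ^ i + 2 ^ j))]
      have hIoo : Finset.Ioo n (n+1) = ∅ := by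
        apply Finset.eq_empty_iff_forall_notMem.2
        intro m hm
        rw [Finset.mem_Ioo] at hm
        omega
      rw [hIoo, Finset.sum_empty, add_zero, Finset.sum_mul]
      have hsplit : ∀ i ∈ Finset.range n, ∑ j ∈ Finset.Ioo i (n+1), a ^ (2 ^ i + 2 ^ j)
          = (∑ j ∈ Finset.Ioo i n, a ^ (2 ^ i + 2 ^ j)) + a ^ (2 ^ i + 2 ^ n) := by
        intro i hi
        have hins : Finset.Ioo i (n+1) = insert n (Finset.Ioo i n) := by
          ext m
          simp only [Finset.mem_Ioo, Finset.mem_insert]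
          have := Finset.mem_range.1 hi
          omega
        rw [hins, Finset.sum_insert (by simp), add_comm]
      rw [Finset.sum_congr rfl hsplit, Finset.sum_add_distrib]
      congr 1
      exact Finset.sum_congr rfl fun i _ => by rw [pow_add]



theorem trace_eq_sum_pow' {F : Type*} [Field F] [Fintype F] [CharP F 2] [Algebra (ZMod 2) F]
    {n : ℕ} (hn : 1 ≤ n) (hcard : Fintype.card F = 2 ^ n) (a : F) :
    algebraMap (ZMod 2) F (Algebra.trace (ZMod 2) F a) = ∑ i ∈ Finset.range n, a ^ 2 ^ i := by
  classical
  haveI : ExpChar F 2 := ExpChar.prime Nat.prime_two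
  haveI : PerfectRing F 2 := inferInstance
  have hcsq : ∀ c : ZMod 2, c ^ 2 = c := by decide
  set φ : F ≃ₐ[ZMod 2] F := AlgEquiv.ofRingEquiv (f := frobeniusEquiv F 2)
    (fun c => by
      rw [show (frobeniusEquiv F 2) (algebraMap (ZMod 2) F c) = (algebraMap (ZMod 2) F c) ^ 2
          from rfl, ← map_pow, hcsq c]) with hφ
  have hpow : ∀ (i : ℕ) (x : F), (φ ^ i) x = x ^ 2 ^ i := by
    intro i
    induction i with
    | zero => intro x; simp
    | succ i ih =>
      intro x
      have hφx : ∀ y : F, φ y = y ^ 2 := fun y => rfl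
      rw [pow_succ, AlgEquiv.mul_apply, hφx, ih, ← pow_mul, mul_comm 2 (2^i), pow_succ]
  have hfinrank : Module.finrank (ZMod 2) F = n := by
    have h := Module.card_eq_pow_finrank (K := ZMod 2) (V := F)
    rw [ZMod.card, hcard] at h
    exact (Nat.pow_right_injective le_rfl h.symm)
  have hcardaut : Fintype.card (F ≃ₐ[ZMod 2] F) = n := by
    rw [← Nat.card_eq_fintype_card, IsGalois.card_aut_eq_finrank, hfinrank]
  -- injectivity of i ↦ φ ^ i on range n
  have hinj : ∀ i ∈ Finset.range n, ∀ j ∈ Finset.range n, φ ^ i = φ ^ j → i = j := by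
    obtain ⟨g, hg⟩ := IsCyclic.exists_generator (α := Fˣ)
    have horder : orderOf g = 2 ^ n - 1 := by
      rw [orderOf_eq_card_of_forall_mem_zpowers hg, Nat.card_units, Nat.card_eq_fintype_card, hcard]
    intro i hi j hj hij
    rw [Finset.mem_range] at hi hj
    rcases Nat.lt_or_ge n 2 with h2 | h2
    · omega
    · have happ : ((g : F)) ^ 2 ^ i = ((g : F)) ^ 2 ^ j := by
        rw [← hpow i (g : F), ← hpow j (g : F), hij]
      have hu : g ^ 2 ^ i = g ^ 2 ^ j := Units.ext (by simpa using happ)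
      have hmod : 2 ^ i ≡ 2 ^ j [MOD 2 ^ n - 1] := by
        have h := (pow_eq_pow_iff_modEq).mp hu
        rwa [horder] at h
      have hbi : 2 ^ i < 2 ^ n - 1 := by
        have h1 : 2 ^ i ≤ 2 ^ (n-1) := Nat.pow_le_pow_right (by norm_num) (by omega)
        have h3 : 2 ^ (n-1) ≥ 2 := by
          calc 2 ^ (n-1) ≥ 2 ^ 1 := Nat.pow_le_pow_right (by norm_num) (by omega)
          _ = 2 := by norm_num
        have h4 : 2 ^ n = 2 * 2 ^ (n-1) := by
          rw [← pow_succ']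
          congr 1
          omega
        omega
      have hbj : 2 ^ j < 2 ^ n - 1 := by
        have h1 : 2 ^ j ≤ 2 ^ (n-1) := Nat.pow_le_pow_right (by norm_num) (by omega)
        have h3 : 2 ^ (n-1) ≥ 2 := by
          calc 2 ^ (n-1) ≥ 2 ^ 1 := Nat.pow_le_pow_right (by norm_num) (by omega)
          _ = 2 := by norm_num
        have h4 : 2 ^ n = 2 * 2 ^ (n-1) := by
          rw [← pow_succ']
          congr 1
          omega
        omega
      have := hmod
      unfold Nat.ModEq at this
      rw [Nat.mod_eq_of_lt hbi, Nat.mod_eq_of_lt hbj] at this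
      exact Nat.pow_right_injective le_rfl this
  have himage : (Finset.range n).image (fun i => φ ^ i) = (Finset.univ : Finset (F ≃ₐ[ZMod 2] F)) := by
    apply Finset.eq_univ_of_card
    rw [Finset.card_image_of_injOn hinj, Finset.card_range, hcardaut]
  rw [trace_eq_sum_automorphisms]
  rw [show (∑ σ : F ≃ₐ[ZMod 2] F, σ a) = ∑ σ ∈ (Finset.univ : Finset (F ≃ₐ[ZMod 2] F)), σ a from rfl,
    ← himage, Finset.sum_image hinj]
  exact Finset.sum_congr rfl fun i _ => hpow i a


/-- The lifted trace `T̂(a)` mod 4 is determined by `Tr(a)` and the quadratic trace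
`Q(a)`: `T̂(a) ≡ 0,1,2,3 (mod 4)` according to `(Tr(a),Q(a)) = (0,0),(1,0),(0,1),(1,1)`. -/
theorem lifted_trace_mod_four (n : ℕ) (hn : 1 ≤ n)
    (F : Type*) [Field F] [Fintype F] [CharP F 2] [Algebra (ZMod 2) F]
    (hcard : Fintype.card F = 2 ^ n) (a : F)
    (T : WittVector 2 F)
    (hT : T = ∑ i ∈ Finset.range n, WittVector.teichmuller 2 (a ^ 2 ^ i))
    (Q : F) (hQ : Q = ∑ i ∈ Finset.range n, ∑ j ∈ Finset.Ioo i n, a ^ (2 ^ i + 2 ^ j)) :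
    ((4 : WittVector 2 F) ∣ T - 0 ↔ Algebra.trace (ZMod 2) F a = 0 ∧ Q = 0) ∧
    ((4 : WittVector 2 F) ∣ T - 1 ↔ Algebra.trace (ZMod 2) F a = 1 ∧ Q = 0) ∧
    ((4 : WittVector 2 F) ∣ T - 2 ↔ Algebra.trace (ZMod 2) F a = 0 ∧ Q = 1) ∧
    ((4 : WittVector 2 F) ∣ T - 3 ↔ Algebra.trace (ZMod 2) F a = 1 ∧ Q = 1) := by
  have h2z : (2 : F) = 0 := by
    have := CharP.cast_eq_zero F 2
    exact_mod_cast this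
  have inj : Function.Injective (algebraMap (ZMod 2) F) := (algebraMap (ZMod 2) F).injective
  set s : F := algebraMap (ZMod 2) F (Algebra.trace (ZMod 2) F a) with hs
  have hT0 : T.coeff 0 = s := by
    rw [hT, (sum_teich_coeffs a n).1, hs, trace_eq_sum_pow' hn hcard]
  have hT1 : T.coeff 1 = Q := by
    rw [hT, (sum_teich_coeffs a n).2, hQ]
  have key : ∀ c d : WittVector 2 F, c + 4 = d → ((4 : WittVector 2 F) ∣ c ↔ 4 ∣ d) := by
    rintro c d rfl
    constructor
    · exact fun h => dvd_add h dvd_rfl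
    · intro h
      have := dvd_sub h (dvd_refl (4 : WittVector 2 F))
      simpa using this
  -- coefficients of small constants
  have hc2 : (2 : WittVector 2 F) = ((2 : ℕ) : WittVector 2 F) := by norm_num
  have h2c0 : (2 : WittVector 2 F).coeff 0 = 0 := by
    rw [hc2]; exact WittVector.coeff_p_zero 2 F
  have h2c1 : (2 : WittVector 2 F).coeff 1 = 1 := by
    rw [hc2]; exact WittVector.coeff_p_one 2 F
  have h1c0 : (1 : WittVector 2 F).coeff 0 = 1 := WittVector.one_coeff_zero 2 F
  have h1c1 : (1 : WittVector 2 F).coeff 1 = 0 := WittVector.one_coeff_eq_of_pos 2 F 1 one_pos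
  have h3c0 : (3 : WittVector 2 F).coeff 0 = 1 := by
    rw [show (3 : WittVector 2 F) = 2 + 1 by norm_num, WittVector.add_coeff_zero, h2c0, h1c0,
      zero_add]
  have h3c1 : (3 : WittVector 2 F).coeff 1 = 1 := by
    rw [show (3 : WittVector 2 F) = 2 + 1 by norm_num, add_coeff_one', h2c1, h1c1, h2c0]
    ring
  have htr0 : s = 0 ↔ Algebra.trace (ZMod 2) F a = 0 := by
    rw [hs]
    exact ⟨fun h => inj (by rw [h, map_zero]), fun h => by rw [h, map_zero]⟩
  have htr1 : s = 1 ↔ Algebra.trace (ZMod 2) F a = 1 := by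
    rw [hs]
    exact ⟨fun h => inj (by rw [h, map_one]), fun h => by rw [h, map_one]⟩
  refine ⟨?_, ?_, ?_, ?_⟩
  · rw [sub_zero, four_dvd_iff', hT0, hT1, htr0]
  · rw [key (T - 1) (T + 3) (by ring), four_dvd_iff', WittVector.add_coeff_zero, add_coeff_one',
      hT0, hT1, h3c0, h3c1, ← htr1]
    constructor
    · rintro ⟨e0, e1⟩
      have hs1 : s = 1 := by linear_combination e0 - h2z
      exact ⟨hs1, by linear_combination e1 + hs1⟩
    · rintro ⟨e0, e1⟩
      exact ⟨by rw [e0]; linear_combination h2z, by rw [e0, e1]; ring⟩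
  · rw [key (T - 2) (T + 2) (by ring), four_dvd_iff', WittVector.add_coeff_zero, add_coeff_one',
      hT0, hT1, h2c0, h2c1, ← htr0]
    constructor
    · rintro ⟨e0, e1⟩
      refine ⟨by linear_combination e0, ?_⟩
      linear_combination e1 - h2z
    · rintro ⟨e0, e1⟩
      refine ⟨by rw [e0]; ring, ?_⟩
      rw [e0, e1]; linear_combination h2z
  · rw [key (T - 3) (T + 1) (by ring), four_dvd_iff', WittVector.add_coeff_zero, add_coeff_one',
      hT0, hT1, h1c0, h1c1, ← htr1]
    constructor
    · rintro ⟨e0, e1⟩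
      have hs1 : s = 1 := by linear_combination e0 - h2z
      refine ⟨hs1, ?_⟩
      linear_combination e1 + hs1
    · rintro ⟨e0, e1⟩
      refine ⟨by rw [e0]; linear_combination h2z, ?_⟩
      rw [e0, e1]; ring
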